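/- Let λ₁,…,λ_r be positive integers with ∑λᵢ = n, and let ν be the partition conjugate to the rearrangement of (λ₁,…,λ_r) in decreasing order, with s parts. Then ∑_{1≤i<j≤s}(νᵢ − νⱼ) + (n−s)·∑_{i=1}^s νᵢ = n² − ∑_{i=1}^r λᵢ². -/

import Mathlib

open Finset

private lemma gauss_aux (S : ℤ) : ∀ m : ℕ, ∑ i ∈ range m, (S - 1 - 2 * (i : ℤ)) = m * (S - m) := by
  intro m
  induction m with
  | zero => simp
  | succ k ih =>
    rw [Finset.sum_range_succ, ih]
    push_cast
    ring

/-- for a composition λ of n with conjugate partition ν (of the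
decreasing rearrangement of λ, with s = max λᵢ parts),
∑_{i<j≤s}(νᵢ − νⱼ) + (n−s)·∑νᵢ = n² − ∑λᵢ². -/
theorem length_tau_q_formula (n r s : ℕ) (lam : Fin r → ℕ)
    (hpos : ∀ i, 0 < lam i) (hsum : ∑ i, lam i = n)
    (hs : s = Finset.univ.sup lam) (ν : Fin s → ℕ)
    (hconj : ∀ i : Fin s,
      ν i = (Finset.univ.filter (fun j : Fin r => (i : ℕ) + 1 ≤ lam j)).card) :
    (∑ p ∈ Finset.univ.filter (fun p : Fin s × Fin s => p.1 < p.2),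
        ((ν p.1 : ℤ) - (ν p.2 : ℤ)))
      + ((n : ℤ) - (s : ℤ)) * (∑ i : Fin s, (ν i : ℤ))
      = (n : ℤ) ^ 2 - ∑ i : Fin r, (lam i : ℤ) ^ 2 := by
  -- the conjugate partition as a function on ℕ
  set c : ℕ → ℤ := fun i => ((Finset.univ.filter (fun j : Fin r => i + 1 ≤ lam j)).card : ℤ)
    with hc
  have hν : ∀ i : Fin s, (ν i : ℤ) = c (i : ℕ) := by
    intro i; rw [hconj]
  have hlam_le : ∀ j : Fin r, lam j ≤ s := by
    intro j; rw [hs]; exact Finset.le_sup (Finset.mem_univ j)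
  -- the key swap lemma
  have L1 : ∀ f : ℕ → ℤ, ∑ i ∈ range s, f i * c i
      = ∑ j : Fin r, ∑ i ∈ range (lam j), f i := by
    intro f
    have hcsum : ∀ i : ℕ, c i = ∑ j : Fin r, (if i + 1 ≤ lam j then (1 : ℤ) else 0) := by
      intro i
      simp only [hc]
      rw [Finset.card_filter, Nat.cast_sum]
      exact Finset.sum_congr rfl fun j _ => by split <;> simp
    calc ∑ i ∈ range s, f i * c i
        = ∑ i ∈ range s, ∑ j : Fin r, (if i + 1 ≤ lam j then f i else 0) := by
          refine Finset.sum_congr rfl fun i _ => ?_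
          rw [hcsum i, Finset.mul_sum]
          exact Finset.sum_congr rfl fun j _ => by rw [mul_ite, mul_one, mul_zero]
      _ = ∑ j : Fin r, ∑ i ∈ range s, (if i + 1 ≤ lam j then f i else 0) :=
          Finset.sum_comm
      _ = ∑ j : Fin r, ∑ i ∈ range (lam j), f i := by
          refine Finset.sum_congr rfl fun j _ => ?_
          rw [← Finset.sum_filter]
          congr 1
          ext x
          simp only [Finset.mem_filter, Finset.mem_range]
          have := hlam_le j
          omega
  -- total sum of ν is n
  have hA : ∑ i ∈ range s, c i = (n : ℤ) := by
    have := L1 (fun _ => 1)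
    simp only [one_mul, Finset.sum_const, Finset.card_range, nsmul_eq_mul, mul_one] at this
    rw [this, ← Nat.cast_sum]
    exact_mod_cast congrArg (Nat.cast : ℕ → ℤ) hsum
  have hνsum : ∑ i : Fin s, (ν i : ℤ) = (n : ℤ) := by
    rw [← hA, Finset.sum_range fun i => c i]
    exact Finset.sum_congr rfl fun i _ => hν i
  -- weighted sum with weights s - 1 - 2i
  have hB : ∑ i ∈ range s, ((s : ℤ) - 1 - 2 * (i : ℤ)) * c i
      = (s : ℤ) * (n : ℤ) - ∑ j : Fin r, (lam j : ℤ) ^ 2 := by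
    rw [L1 (fun i => (s : ℤ) - 1 - 2 * (i : ℤ))]
    have : ∀ j : Fin r, ∑ i ∈ range (lam j), ((s : ℤ) - 1 - 2 * (i : ℤ))
        = (lam j : ℤ) * ((s : ℤ) - (lam j : ℤ)) := fun j => gauss_aux (s : ℤ) (lam j)
    rw [Finset.sum_congr rfl fun j _ => this j]
    have hn : ∑ j : Fin r, (lam j : ℤ) = (n : ℤ) := by
      rw [← Nat.cast_sum]; exact_mod_cast congrArg (Nat.cast : ℕ → ℤ) hsum
    calc ∑ j : Fin r, (lam j : ℤ) * ((s : ℤ) - (lam j : ℤ))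
        = (s : ℤ) * ∑ j : Fin r, (lam j : ℤ) - ∑ j : Fin r, (lam j : ℤ) ^ 2 := by
          rw [Finset.mul_sum, ← Finset.sum_sub_distrib]
          exact Finset.sum_congr rfl fun j _ => by ring
      _ = (s : ℤ) * (n : ℤ) - ∑ j : Fin r, (lam j : ℤ) ^ 2 := by rw [hn]
  -- the pair sum equals the weighted sum
  have hT : (∑ p ∈ Finset.univ.filter (fun p : Fin s × Fin s => p.1 < p.2),
        ((ν p.1 : ℤ) - (ν p.2 : ℤ)))
      = ∑ i ∈ range s, ((s : ℤ) - 1 - 2 * (i : ℤ)) * c i := by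
    rw [Finset.sum_filter, Fintype.sum_prod_type]
    have step1 : (∑ i : Fin s, ∑ j : Fin s,
          (if i < j then ((ν i : ℤ) - (ν j : ℤ)) else 0))
        = ∑ i ∈ range s, ∑ j ∈ range s, (if i < j then c i - c j else 0) := by
      rw [Finset.sum_range fun i => ∑ j ∈ range s, (if i < j then c i - c j else 0)]
      refine Finset.sum_congr rfl fun i _ => ?_
      rw [Finset.sum_range fun j => (if (i : ℕ) < j then c (i : ℕ) - c j else 0)]
      refine Finset.sum_congr rfl fun j _ => ?_
      simp only [hν, Fin.lt_def]
    rw [step1]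
    have split : ∑ i ∈ range s, ∑ j ∈ range s, (if i < j then c i - c j else 0)
        = (∑ i ∈ range s, ∑ j ∈ range s, (if i < j then c i else 0))
          - ∑ i ∈ range s, ∑ j ∈ range s, (if i < j then c j else 0) := by
      rw [← Finset.sum_sub_distrib]
      refine Finset.sum_congr rfl fun i _ => ?_
      rw [← Finset.sum_sub_distrib]
      refine Finset.sum_congr rfl fun j _ => ?_
      by_cases h : i < j <;> simp [h]
    rw [split]
    have term1 : ∑ i ∈ range s, ∑ j ∈ range s, (if i < j then c i else 0)
        = ∑ i ∈ range s, ((s - (i + 1) : ℕ) : ℤ) * c i := by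
      refine Finset.sum_congr rfl fun i hi => ?_
      rw [← Finset.sum_filter]
      have hfil : Finset.filter (fun j => i < j) (range s) = Finset.Ico (i + 1) s := by
        ext x; simp only [Finset.mem_filter, Finset.mem_range, Finset.mem_Ico]; omega
      rw [hfil, Finset.sum_const, Nat.card_Ico, nsmul_eq_mul]
    have term2 : ∑ i ∈ range s, ∑ j ∈ range s, (if i < j then c j else 0)
        = ∑ j ∈ range s, (j : ℤ) * c j := by
      rw [Finset.sum_comm]
      refine Finset.sum_congr rfl fun j hj => ?_
      rw [← Finset.sum_filter]
      have hfil : Finset.filter (fun i => i < j) (range s) = range j := by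
        rw [Finset.mem_range] at hj
        ext x
        simp only [Finset.mem_filter, Finset.mem_range]
        omega
      rw [hfil, Finset.sum_const, Finset.card_range, nsmul_eq_mul]
    rw [term1, term2, ← Finset.sum_sub_distrib]
    refine Finset.sum_congr rfl fun i hi => ?_
    rw [Finset.mem_range] at hi
    have : ((s - (i + 1) : ℕ) : ℤ) = (s : ℤ) - (i : ℤ) - 1 := by omega
    rw [this]; ring
  -- put everything together
  rw [hT, hνsum, hB]
  ring
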